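/- Let u(s) minimize J(u) + (s/2)‖Au − f^δ‖² and v(s) = Au(s) − f^δ, with ‖f^δ − f‖ ≤ δ and primal-dual solution (x̄, ȳ). Then for all s > 0: D^{−A*ȳ}(u(s), x̄) + D^{−sA*v(s)}(x̄, u(s)) ≤ (1/(4s))(‖ȳ‖ + sδ)². -/
import Mathlib


open Set MeasureTheory

noncomputable section

notation "⟪" x ", " y "⟫" => @inner ℝ _ _ x y

/-- `u` is a subgradient of the convex function `J` at `x`. -/
def HasSubgrad {p : ℕ} (J : EuclideanSpace ℝ (Fin p) → ℝ) (u x : EuclideanSpace ℝ (Fin p)) :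
    Prop :=
  ∀ z, J x + ⟪u, z - x⟫ ≤ J z

/-- Bregman divergence `D^u(x₁,x₂) = J(x₁) - J(x₂) - ⟨u, x₁ - x₂⟩` (for `u ∈ ∂J(x₂)`). -/
def Breg {p : ℕ} (J : EuclideanSpace ℝ (Fin p) → ℝ) (u x₁ x₂ : EuclideanSpace ℝ (Fin p)) : ℝ :=
  J x₁ - J x₂ - ⟪u, x₁ - x₂⟫
/-- Bregman bound along the Tikhonov regularization path `u(s) ∈ argmin J + (s/2)‖A·-f^δ‖²`,
`v(s) = Au(s) - f^δ`:
`D^{-A*ȳ}(u(s), x̄) + D^{-sA*v(s)}(x̄, u(s)) ≤ (1/(4s))(‖ȳ‖ + sδ)²`. -/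
theorem tikhonov_bregman_bound {p d : ℕ}
    (A : EuclideanSpace ℝ (Fin p) →L[ℝ] EuclideanSpace ℝ (Fin d))
    (J : EuclideanSpace ℝ (Fin p) → ℝ) (hJ : ConvexOn ℝ Set.univ J)
    (f fδ : EuclideanSpace ℝ (Fin d)) (δ : ℝ) (hnoise : ‖fδ - f‖ ≤ δ)
    (xb : EuclideanSpace ℝ (Fin p)) (yb : EuclideanSpace ℝ (Fin d))
    (hsub : HasSubgrad J (-(ContinuousLinearMap.adjoint A yb)) xb) (hfeas : A xb = f)
    (u : ℝ → EuclideanSpace ℝ (Fin p)) (v : ℝ → EuclideanSpace ℝ (Fin d))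
    (hv : ∀ s : ℝ, v s = A (u s) - fδ)
    (hmin : ∀ s > (0:ℝ), ∀ w, J (u s) + s / 2 * ‖A (u s) - fδ‖ ^ 2 ≤ J w + s / 2 * ‖A w - fδ‖ ^ 2)
    (hopt : ∀ s > (0:ℝ), HasSubgrad J (-(s • ContinuousLinearMap.adjoint A (v s))) (u s)) :
    ∀ s > (0:ℝ),
      Breg J (-(ContinuousLinearMap.adjoint A yb)) (u s) xb +
          Breg J (-(s • ContinuousLinearMap.adjoint A (v s))) xb (u s) ≤
        1 / (4 * s) * (‖yb‖ + s * δ) ^ 2 := by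
  intro s hs
  set e : EuclideanSpace ℝ (Fin d) := fδ - f with he
  have hAu : A (u s) - A xb = v s + e := by
    rw [hv, hfeas, he]; abel
  have key : Breg J (-(ContinuousLinearMap.adjoint A yb)) (u s) xb +
      Breg J (-(s • ContinuousLinearMap.adjoint A (v s))) xb (u s)
      = ⟪yb, v s⟫ + ⟪yb, e⟫ - s * ⟪v s, v s⟫ - s * ⟪v s, e⟫ := by
    have h1 : ⟪ContinuousLinearMap.adjoint A yb, u s - xb⟫ = ⟪yb, v s⟫ + ⟪yb, e⟫ := by
      rw [ContinuousLinearMap.adjoint_inner_left, map_sub, hAu, inner_add_right]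
    have h2 : ⟪ContinuousLinearMap.adjoint A (v s), xb - u s⟫
        = -(⟪v s, v s⟫ + ⟪v s, e⟫) := by
      rw [ContinuousLinearMap.adjoint_inner_left, map_sub, show A xb - A (u s) = -(v s + e) by
        rw [← hAu]; abel, inner_neg_right, inner_add_right]
    simp only [Breg, inner_neg_left, inner_smul_left, RCLike.ofReal_real_eq_id, id_eq, conj_trivial, h1, h2]
    ring
  rw [key]
  -- completing the square
  have h0 : (0:ℝ) ≤ ⟪yb - s • e - (2*s) • v s, yb - s • e - (2*s) • v s⟫ :=
    real_inner_self_nonneg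
  have hexp : ⟪yb - s • e - (2*s) • v s, yb - s • e - (2*s) • v s⟫
      = ⟪yb, yb⟫ - 2*s*⟪yb, e⟫ - 4*s*⟪yb, v s⟫ + s^2*⟪e, e⟫ + 4*s^2*⟪v s, e⟫
        + 4*s^2*⟪v s, v s⟫ := by
    simp only [inner_sub_left, inner_sub_right, real_inner_smul_left, real_inner_smul_right,
      real_inner_comm e yb, real_inner_comm (v s) yb, real_inner_comm e (v s)]
    ring
  rw [hexp] at h0
  have hye : ⟪yb, e⟫ ≤ ‖yb‖ * δ := by
    calc ⟪yb, e⟫ ≤ ‖yb‖ * ‖e‖ := real_inner_le_norm yb e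
    _ ≤ ‖yb‖ * δ := by
        exact mul_le_mul_of_nonneg_left hnoise (norm_nonneg yb)
  have hδ : (0:ℝ) ≤ δ := le_trans (norm_nonneg e) hnoise
  have hee : ⟪e, e⟫ ≤ δ^2 := by
    rw [real_inner_self_eq_norm_sq]
    exact pow_le_pow_left₀ (norm_nonneg e) hnoise 2
  have hyy : ⟪yb, yb⟫ = ‖yb‖^2 := real_inner_self_eq_norm_sq yb
  rw [hyy] at h0
  rw [div_mul_eq_mul_div, one_mul, le_div_iff₀ (by positivity : (0:ℝ) < 4*s)]
  nlinarith [h0, hye, hee, hδ, hs, norm_nonneg yb, mul_pos hs hs]
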